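/- Let a, b, c, d ∈ ℂ satisfy c(|a|² + |d|²) = −a d b̄, |a|² + |b|² + |d|² = 1, with a and d not both zero, and let E be the 3×3 matrix with rows (0, 2a, 2b), (0, 2c, 2d), (0, 0, 0). Then for every unit complex number w, the vector v(w) = (w̄ a + b d̄, 1 − |b|², b̄ a + w d̄)ᵀ satisfies Φ(w̄E) v(w) = v(w), i.e. v(w) is an eigenvector of (1/2)(w̄E + wE*) for the eigenvalue 1, and ‖v(w)‖² = 2(1 − |b|²)(1 − 2 Re(w̄ c)). -/

import Mathlib

open Matrix

/-- The Hermitian part `Φ(A) = (A + A*)/2`. -/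
noncomputable def hermPart {n : ℕ} (A : Matrix (Fin n) (Fin n) ℂ) :
    Matrix (Fin n) (Fin n) ℂ :=
  (1 / 2 : ℂ) • (A + Aᴴ)

theorem eigenvector_of_disk_matrix (a b c d : ℂ)
    (habcd : c * (((‖a‖) ^ 2 + (‖d‖) ^ 2 : ℝ) : ℂ)
      = -(a * d * starRingEnd ℂ b))
    (hnorm : (‖a‖) ^ 2 + (‖b‖) ^ 2 + (‖d‖) ^ 2 = 1)
    (hnz : ¬(a = 0 ∧ d = 0))
    (w : ℂ) (hw : ‖w‖ = 1) :
    (hermPart ((starRingEnd ℂ w) •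
        !![0, 2 * a, 2 * b; 0, 2 * c, 2 * d; 0, 0, 0])).mulVec
      ![starRingEnd ℂ w * a + b * starRingEnd ℂ d,
        1 - (‖b‖ : ℂ) ^ 2,
        starRingEnd ℂ b * a + w * starRingEnd ℂ d]
      = ![starRingEnd ℂ w * a + b * starRingEnd ℂ d,
          1 - (‖b‖ : ℂ) ^ 2,
          starRingEnd ℂ b * a + w * starRingEnd ℂ d] ∧
    ∑ i : Fin 3, (‖(![starRingEnd ℂ w * a + b * starRingEnd ℂ d,
           1 - (‖b‖ : ℂ) ^ 2,
           starRingEnd ℂ b * a + w * starRingEnd ℂ d] i)‖) ^ 2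
      = 2 * (1 - (‖b‖) ^ 2) * (1 - 2 * (starRingEnd ℂ w * c).re) := by
  have habs : ∀ z : ℂ, ((‖z‖ : ℝ) : ℂ) ^ 2 = z * starRingEnd ℂ z := by
    intro z
    rw [Complex.mul_conj, Complex.normSq_eq_norm_sq]
    push_cast
    ring
  have hww : w * starRingEnd ℂ w = 1 := by
    rw [Complex.mul_conj, Complex.normSq_eq_norm_sq, hw]
    norm_num
  have hN : a * starRingEnd ℂ a + b * starRingEnd ℂ b + d * starRingEnd ℂ d = 1 := by
    rw [← habs, ← habs, ← habs]
    exact_mod_cast congrArg (Complex.ofReal) hnorm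
  have H : c * (a * starRingEnd ℂ a + d * starRingEnd ℂ d) = -(a * d * starRingEnd ℂ b) := by
    rw [← habs, ← habs, ← habcd]
    push_cast
    ring
  have H' : starRingEnd ℂ c * (starRingEnd ℂ a * a + starRingEnd ℂ d * d)
      = -(starRingEnd ℂ a * starRingEnd ℂ d * b) := by
    have := congrArg (starRingEnd ℂ) H
    simpa [_root_.map_mul, _root_.map_add, _root_.map_neg] using this
  constructor
  · ext i
    fin_cases i
    · simp [hermPart, Matrix.mulVec, dotProduct, Fin.sum_univ_three, map_ofNat, habs]
      linear_combination (b * starRingEnd ℂ d) * hww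
    · simp [hermPart, Matrix.mulVec, dotProduct, Fin.sum_univ_three, map_ofNat, habs]
      linear_combination (a * starRingEnd ℂ a + d * starRingEnd ℂ d) * hww
        + (1 - w * starRingEnd ℂ c - starRingEnd ℂ w * c) * hN
        + starRingEnd ℂ w * H + w * H'
    · simp [hermPart, Matrix.mulVec, dotProduct, Fin.sum_univ_three, map_ofNat, habs]
      linear_combination (starRingEnd ℂ b * a) * hww
  · have h2 := Complex.add_conj (starRingEnd ℂ w * c)
    rw [_root_.map_mul, Complex.conj_conj] at h2
    push_cast at h2
    have hre : ((starRingEnd ℂ w * c).re : ℂ)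
        = (starRingEnd ℂ w * c + w * starRingEnd ℂ c) / 2 := by
      linear_combination (-1/2 : ℂ) * h2
    have key : ((∑ i : Fin 3, (‖(![starRingEnd ℂ w * a + b * starRingEnd ℂ d,
           1 - (‖b‖ : ℂ) ^ 2,
           starRingEnd ℂ b * a + w * starRingEnd ℂ d] i)‖) ^ 2 : ℝ) : ℂ)
        = ((2 * (1 - (‖b‖) ^ 2) * (1 - 2 * (starRingEnd ℂ w * c).re) : ℝ) : ℂ) := by
      push_cast
      rw [Fin.sum_univ_three]
      simp only [Matrix.cons_val_zero, Matrix.cons_val_one, Matrix.head_cons,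
        Matrix.cons_val_two, Matrix.tail_cons]
      simp only [habs]
      simp only [_root_.map_add, _root_.map_sub, _root_.map_mul, _root_.map_one,
        Complex.conj_conj]
      rw [hre]
      linear_combination (a * starRingEnd ℂ a + d * starRingEnd ℂ d) * hww
        + (1 + b * starRingEnd ℂ b - 2 * (starRingEnd ℂ w * c + w * starRingEnd ℂ c)) * hN
        + 2 * starRingEnd ℂ w * H + 2 * w * H'
    exact_mod_cast key
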